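/- arXiv:0903.3007 — 4 statements merged into one kernel-verified Lean document; each statement's English description precedes it below -/
import Mathlib

section
/- Let u : ℝ → ℂ be continuous on [x₀, ∞) with u(x) · x^s → 1 as x → ∞, where s = σ + iτ and σ > 1. Then Σ_{n=1}^∞ u(x+n) = O(x^{1-σ}) as x → ∞. -/
open Filter Topology Asymptotics

lemma stmt_6_aux (σ : ℝ) (hσ : 1 < σ) (a : ℝ) (ha : 1 ≤ a) :
    (a + 1) ^ (-σ) ≤ (a ^ (1 - σ) - (a + 1) ^ (1 - σ)) / (σ - 1) := by
  have h0a : (0:ℝ) < a := lt_of_lt_of_le one_pos ha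
  have hInt : IntervalIntegrable (fun t : ℝ => t ^ (-σ)) MeasureTheory.volume a (a + 1) := by
    apply ContinuousOn.intervalIntegrable
    apply ContinuousOn.rpow_const continuousOn_id
    intro t ht
    left
    rw [Set.uIcc_of_le (by linarith)] at ht
    exact ne_of_gt (lt_of_lt_of_le h0a ht.1)
  have h1 : ((a + 1) ^ (-σ) : ℝ) = ∫ _ in a..(a + 1), ((a + 1) ^ (-σ) : ℝ) := by
    rw [intervalIntegral.integral_const]
    simp
  have h2 : (∫ _ in a..(a + 1), ((a + 1) ^ (-σ) : ℝ)) ≤ ∫ t in a..(a + 1), t ^ (-σ) := by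
    apply intervalIntegral.integral_mono_on (by linarith) intervalIntegrable_const hInt
    intro t ht
    exact Real.rpow_le_rpow_of_nonpos (lt_of_lt_of_le h0a ht.1) ht.2 (by linarith)
  have h3 : (∫ t in a..(a + 1), t ^ (-σ)) = ((a + 1) ^ (-σ + 1) - a ^ (-σ + 1)) / (-σ + 1) := by
    apply integral_rpow
    right
    constructor
    · intro h; rw [neg_eq_iff_eq_neg] at h; linarith [h]
    · rw [Set.uIcc_of_le (by linarith)]
      intro h
      exact absurd h.1 (by linarith)
  have h4 : ((a + 1) ^ (-σ + 1) - a ^ (-σ + 1)) / (-σ + 1)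
      = (a ^ (1 - σ) - (a + 1) ^ (1 - σ)) / (σ - 1) := by
    rw [show -σ + 1 = 1 - σ by ring]
    rw [div_eq_div_iff (by linarith) (by linarith)]
    ring
  calc (a + 1) ^ (-σ) = ∫ _ in a..(a + 1), ((a + 1) ^ (-σ) : ℝ) := h1
    _ ≤ ∫ t in a..(a + 1), t ^ (-σ) := h2
    _ = _ := by rw [h3, h4]

theorem stmt_6 (u : ℝ → ℂ) (s : ℂ) (x₀ : ℝ) (hx₀ : 0 < x₀)
    (hσ : 1 < s.re)
    (hcont : ContinuousOn u (Set.Ici x₀))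
    (hasymp : Tendsto (fun x : ℝ => u x * (x : ℂ) ^ s) atTop (𝓝 1)) :
    (fun x : ℝ => ∑' n : ℕ+, u (x + (n : ℝ))) =O[atTop]
      (fun x : ℝ => x ^ (1 - s.re)) := by
  set σ := s.re with hσdef
  have hσ1 : (0:ℝ) < σ - 1 := by linarith
  -- eventual bound ‖u y‖ ≤ 2 y^(-σ)
  have h1 : ∀ᶠ y in atTop, ‖u y * (y:ℂ) ^ s‖ < 2 := by
    have hn := hasymp.norm
    simp only [norm_one] at hn
    exact hn.eventually_lt_const (by norm_num)
  rw [eventually_atTop] at h1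
  obtain ⟨X, hX⟩ := h1
  have hub : ∀ y : ℝ, max X 1 ≤ y → ‖u y‖ ≤ 2 * y ^ (-σ) := by
    intro y hy
    have hy1 : (1:ℝ) ≤ y := le_trans (le_max_right _ _) hy
    have hy0 : (0:ℝ) < y := by linarith
    have h2 := le_of_lt (hX y (le_trans (le_max_left _ _) hy))
    have hnorm : ‖u y * (y:ℂ) ^ s‖ = ‖u y‖ * y ^ σ := by
      rw [norm_mul]
      congr 1
      rw [Complex.norm_cpow_eq_rpow_re_of_pos hy0]
    rw [hnorm] at h2
    have hpos : (0:ℝ) < y ^ σ := Real.rpow_pos_of_pos hy0 σ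
    rw [Real.rpow_neg (le_of_lt hy0)]
    calc ‖u y‖ = ‖u y‖ * y ^ σ * (y ^ σ)⁻¹ := by field_simp
      _ ≤ 2 * (y ^ σ)⁻¹ :=
          mul_le_mul_of_nonneg_right h2 (le_of_lt (inv_pos.mpr hpos))
  rw [isBigO_iff]
  refine ⟨2 / (σ - 1), ?_⟩
  filter_upwards [eventually_ge_atTop (max X 1)] with x hx
  have hx1 : (1:ℝ) ≤ x := le_trans (le_max_right _ _) hx
  have hx0 : (0:ℝ) < x := by linarith
  -- the comparison function
  set g : ℕ → ℝ := fun i => 2 * (x + (i + 1)) ^ (-σ) with hg_def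
  have hgnonneg : ∀ i, 0 ≤ g i := by
    intro i
    exact mul_nonneg (by norm_num) (Real.rpow_nonneg (by positivity) _)
  have hgsum : Summable g := by
    have h0 : Summable (fun n : ℕ => (n : ℝ) ^ (-σ)) :=
      Real.summable_nat_rpow.mpr (by linarith)
    have h0' : Summable (fun i : ℕ => ((i + 1 : ℕ) : ℝ) ^ (-σ)) :=
      (summable_nat_add_iff 1).mpr h0
    apply Summable.mul_left
    apply Summable.of_nonneg_of_le (fun i => Real.rpow_nonneg (by positivity) _) _ h0'
    intro i
    apply Real.rpow_le_rpow_of_nonpos (by positivity) (by push_cast; linarith) (by linarith)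
  -- bound on each term
  have hterm : ∀ i : ℕ, ‖u (x + ((i : ℝ) + 1))‖ ≤ g i := by
    intro i
    have : max X 1 ≤ x + ((i : ℝ) + 1) := by
      have : (0:ℝ) ≤ (i : ℝ) + 1 := by positivity
      linarith [hx]
    exact hub _ this
  -- summability of norms over ℕ+
  have hvnorm : Summable (fun i : ℕ => ‖u (x + ((i : ℝ) + 1))‖) :=
    Summable.of_nonneg_of_le (fun i => norm_nonneg _) hterm hgsum
  have hpnat : (∑' n : ℕ+, u (x + (n : ℝ))) = ∑' i : ℕ, u (x + ((i : ℝ) + 1)) := by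
    rw [← Equiv.tsum_eq Equiv.pnatEquivNat.symm (fun n : ℕ+ => u (x + (n : ℝ)))]
    apply tsum_congr
    intro i
    congr 2
    simp [Equiv.pnatEquivNat, Nat.succPNat]
  have hnormsum : Summable (fun i : ℕ => u (x + ((i : ℝ) + 1))) :=
    Summable.of_norm hvnorm
  -- partial sums of g are bounded
  have hpartial : ∀ N : ℕ, ∑ i ∈ Finset.range N, g i ≤ 2 / (σ - 1) * x ^ (1 - σ) := by
    intro N
    have hstep : ∀ i : ℕ, g i ≤
        2 / (σ - 1) * ((x + (i:ℝ)) ^ (1 - σ) - (x + ((i:ℝ) + 1)) ^ (1 - σ)) := by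
      intro i
      have ha : (1:ℝ) ≤ x + i := by
        have : (0:ℝ) ≤ (i:ℝ) := by positivity
        linarith
      have haux := stmt_6_aux σ hσ (x + i) ha
      show 2 * (x + ((i:ℝ) + 1)) ^ (-σ) ≤ _
      have hrw : x + ((i:ℝ) + 1) = (x + (i:ℝ)) + 1 := by ring
      rw [hrw]
      calc 2 * ((x + (i:ℝ)) + 1) ^ (-σ)
          ≤ 2 * (((x + (i:ℝ)) ^ (1 - σ) - ((x + (i:ℝ)) + 1) ^ (1 - σ)) / (σ - 1)) :=
            mul_le_mul_of_nonneg_left haux (by norm_num)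
        _ = 2 / (σ - 1) * ((x + (i:ℝ)) ^ (1 - σ) - ((x + (i:ℝ)) + 1) ^ (1 - σ)) := by ring
    calc ∑ i ∈ Finset.range N, g i
        ≤ ∑ i ∈ Finset.range N,
            2 / (σ - 1) * ((x + (i:ℝ)) ^ (1 - σ) - (x + ((i:ℝ) + 1)) ^ (1 - σ)) :=
          Finset.sum_le_sum fun i _ => hstep i
      _ = 2 / (σ - 1) * ∑ i ∈ Finset.range N,
            ((x + (i:ℝ)) ^ (1 - σ) - (x + ((i:ℝ) + 1)) ^ (1 - σ)) := by rw [Finset.mul_sum]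
      _ = 2 / (σ - 1) * ((x + (0:ℕ)) ^ (1 - σ) - (x + (N:ℕ)) ^ (1 - σ)) := by
          congr 1
          have := Finset.sum_range_sub' (fun i : ℕ => (x + (i:ℝ)) ^ (1 - σ)) N
          rw [← this]
          apply Finset.sum_congr rfl
          intro i _
          push_cast
          ring_nf
      _ ≤ 2 / (σ - 1) * x ^ (1 - σ) := by
          apply mul_le_mul_of_nonneg_left _ (by positivity)
          have : (0:ℝ) ≤ (x + (N:ℕ)) ^ (1 - σ) := Real.rpow_nonneg (by positivity) _
          push_cast
          simp only [add_zero]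
          linarith
  have hgts : ∑' i : ℕ, g i ≤ 2 / (σ - 1) * x ^ (1 - σ) :=
    Real.tsum_le_of_sum_range_le hgnonneg hpartial
  -- conclude
  have hbound : ‖∑' n : ℕ+, u (x + (n : ℝ))‖ ≤ 2 / (σ - 1) * x ^ (1 - σ) := by
    rw [hpnat]
    calc ‖∑' i : ℕ, u (x + ((i : ℝ) + 1))‖
        ≤ ∑' i : ℕ, ‖u (x + ((i : ℝ) + 1))‖ := norm_tsum_le_tsum_norm hvnorm
      _ ≤ ∑' i : ℕ, g i := Summable.tsum_le_tsum hterm hvnorm hgsum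
      _ ≤ 2 / (σ - 1) * x ^ (1 - σ) := hgts
  calc ‖∑' n : ℕ+, u (x + (n : ℝ))‖ ≤ 2 / (σ - 1) * x ^ (1 - σ) := hbound
    _ = 2 / (σ - 1) * ‖x ^ (1 - σ)‖ := by
        rw [Real.norm_eq_abs, abs_of_nonneg (Real.rpow_nonneg (le_of_lt hx0) _)]
end

section
/- Let u : ℝ → ℂ be continuous on [x₀, ∞), x₀ > 0, with u(x) ~ x^{-s} as x → ∞ for s = σ + iτ with 0 < σ ≤ 1, and suppose Σ_{n=1}^∞ u(x+n) converges uniformly on [x₀, ∞). Then the function x ↦ Σ_{n=1}^∞ u(x+n) is bounded on [x₀, ∞). -/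
open Filter Topology

theorem stmt_7 (u : ℝ → ℂ) (f : ℝ → ℂ) (s : ℂ) (x₀ : ℝ) (hx₀ : 0 < x₀)
    (hσ₁ : 0 < s.re) (hσ₂ : s.re ≤ 1)
    (hcont : ContinuousOn u (Set.Ici x₀))
    (hasymp : Tendsto (fun x : ℝ => u x * (x : ℂ) ^ s) atTop (𝓝 1))
    (hunif : TendstoUniformlyOn
      (fun (N : ℕ) (x : ℝ) => ∑ n ∈ Finset.Icc 1 N, u (x + (n : ℝ)))
      f atTop (Set.Ici x₀)) :
    ∃ C : ℝ, ∀ x ∈ Set.Ici x₀, ‖f x‖ ≤ C := by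
  -- eventual bound on ‖u x * x^s‖
  have h2 : ∀ᶠ x : ℝ in atTop, ‖u x * (x : ℂ) ^ s‖ ≤ 2 := by
    filter_upwards [hasymp.eventually (Metric.closedBall_mem_nhds (1 : ℂ) one_pos)] with x hx
    have hx' : ‖u x * (x : ℂ) ^ s - 1‖ ≤ 1 := by
      simpa [Metric.mem_closedBall, dist_eq_norm] using hx
    calc ‖u x * (x : ℂ) ^ s‖ = ‖(u x * (x : ℂ) ^ s - 1) + 1‖ := by ring_nf
      _ ≤ ‖u x * (x : ℂ) ^ s - 1‖ + ‖(1 : ℂ)‖ := norm_add_le _ _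
      _ ≤ 2 := by rw [norm_one]; linarith
  obtain ⟨M, hM⟩ := eventually_atTop.1 h2
  set M' : ℝ := max (max M 1) x₀ with hM'def
  -- bound of u on [x₀, ∞)
  have hub : ∃ B : ℝ, 0 ≤ B ∧ ∀ x ≥ x₀, ‖u x‖ ≤ B := by
    have hcomp : IsCompact (Set.Icc x₀ M') := isCompact_Icc
    obtain ⟨B₁, hB₁⟩ := hcomp.exists_bound_of_continuousOn
      (hcont.mono (Set.Icc_subset_Ici_self))
    refine ⟨max B₁ 2, le_trans (by norm_num) (le_max_right _ _), fun x hx => ?_⟩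
    rcases le_total x M' with h | h
    · exact le_trans (hB₁ x ⟨hx, h⟩) (le_max_left _ _)
    · -- x ≥ M' ≥ max M 1
      have hx1 : (1 : ℝ) ≤ x := le_trans (le_trans (le_max_right M 1) (le_max_left _ _)) h
      have hxM : M ≤ x := le_trans (le_trans (le_max_left M 1) (le_max_left _ _)) h
      have hxpos : (0 : ℝ) < x := lt_of_lt_of_le one_pos hx1
      have hns : ‖(x : ℂ) ^ s‖ = x ^ s.re := by
        rw [Complex.norm_cpow_eq_rpow_re_of_pos hxpos]
      have h1le : (1 : ℝ) ≤ x ^ s.re := by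
        calc (1 : ℝ) = (1 : ℝ) ^ s.re := (Real.one_rpow _).symm
          _ ≤ x ^ s.re := Real.rpow_le_rpow (by norm_num) hx1 hσ₁.le
      have : ‖u x‖ ≤ ‖u x‖ * x ^ s.re := by
        nlinarith [norm_nonneg (u x)]
      refine le_trans this (le_trans ?_ (le_max_right B₁ 2))
      calc ‖u x‖ * x ^ s.re = ‖u x * (x : ℂ) ^ s‖ := by rw [norm_mul, hns]
        _ ≤ 2 := hM x hxM
  obtain ⟨B, hB0, hB⟩ := hub
  -- uniform convergence: pick N with dist < 1
  have := (Metric.tendstoUniformlyOn_iff.1 hunif) 1 one_pos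
  obtain ⟨N, hN⟩ := eventually_atTop.1 this
  refine ⟨N * B + 1, fun x hx => ?_⟩
  have hx' : x₀ ≤ x := hx
  have hsum : ‖∑ n ∈ Finset.Icc 1 N, u (x + (n : ℝ))‖ ≤ N * B := by
    calc ‖∑ n ∈ Finset.Icc 1 N, u (x + (n : ℝ))‖
        ≤ ∑ n ∈ Finset.Icc 1 N, ‖u (x + (n : ℝ))‖ := norm_sum_le _ _
      _ ≤ ∑ _n ∈ Finset.Icc 1 N, B := by
          refine Finset.sum_le_sum fun n _ => hB _ ?_
          have : (0 : ℝ) ≤ (n : ℝ) := Nat.cast_nonneg n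
          linarith
      _ ≤ N * B := by
          rw [Finset.sum_const, nsmul_eq_mul]
          have : (Finset.Icc 1 N).card ≤ N := by
            simp [Nat.card_Icc]
          exact mul_le_mul_of_nonneg_right (by exact_mod_cast this) hB0
  have hfd : dist (f x) (∑ n ∈ Finset.Icc 1 N, u (x + (n : ℝ))) < 1 :=
    hN N le_rfl x hx
  calc ‖f x‖ = ‖(f x - ∑ n ∈ Finset.Icc 1 N, u (x + (n : ℝ)))
        + ∑ n ∈ Finset.Icc 1 N, u (x + (n : ℝ))‖ := by ring_nf
    _ ≤ ‖f x - ∑ n ∈ Finset.Icc 1 N, u (x + (n : ℝ))‖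
        + ‖∑ n ∈ Finset.Icc 1 N, u (x + (n : ℝ))‖ := norm_add_le _ _
    _ ≤ N * B + 1 := by
        rw [← dist_eq_norm] at *
        linarith
end

section
/- For s ∈ ℂ with Re(s) > 1 and x > 0, Σ_{n=1}^∞ (x+n)^{-s} = (1/Γ(s)) ∫_0^∞ t^{s-1} e^{-xt} / (e^t - 1) dt. -/
open MeasureTheory

theorem stmt_8 (s : ℂ) (hs : 1 < s.re) (x : ℝ) (hx : 0 < x) :
    (∑' n : ℕ+, ((x : ℂ) + (n : ℕ)) ^ (-s)) =
      (1 / Complex.Gamma s) *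
        ∫ t in Set.Ioi (0 : ℝ),
          (t : ℂ) ^ (s - 1) * Complex.exp (-(x : ℂ) * t) / (Complex.exp t - 1) := by
  have hs0 : 0 < s.re := lt_trans one_pos hs
  set F : ℝ → ℂ := fun t ↦ Complex.exp (-(x : ℂ) * t) / (Complex.exp t - 1) with hF_def
  have hF : ∀ t ∈ Set.Ioi (0 : ℝ),
      HasSum (fun n : ℕ+ ↦ (1 : ℂ) * Real.exp (-(x + n) * t)) (F t) := by
    intro t ht
    rw [Set.mem_Ioi] at ht
    have hr0 : (0 : ℝ) ≤ Real.exp (-t) := (Real.exp_pos _).le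
    have hr1 : Real.exp (-t) < 1 := Real.exp_lt_one_iff.mpr (by linarith)
    have het : (1 : ℝ) < Real.exp t := by simpa using Real.exp_lt_exp.mpr ht
    have hgeo : HasSum (fun n : ℕ ↦ Real.exp (-t) ^ n) (1 - Real.exp (-t))⁻¹ :=
      hasSum_geometric_of_lt_one hr0 hr1
    have h1 : HasSum (fun n : ℕ ↦ Real.exp (-x * t) * Real.exp (-t) *
        Real.exp (-t) ^ n) (Real.exp (-x * t) / (Real.exp t - 1)) := by
      convert hgeo.mul_left (Real.exp (-x * t) * Real.exp (-t)) using 1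
      · rfl
      rw [Real.exp_neg t]
      field_simp
    have h2 : HasSum (fun n : ℕ+ ↦ Real.exp (-(x + n) * t))
        (Real.exp (-x * t) / (Real.exp t - 1)) := by
      rw [← Equiv.pnatEquivNat.symm.hasSum_iff]
      convert h1 using 2 with n
      simp only [Function.comp, Equiv.pnatEquivNat_symm_apply]
      rw [← Real.exp_nat_mul, ← Real.exp_add, ← Real.exp_add]
      congr 1
      simp only [Nat.succPNat, PNat.mk_coe]
      push_cast
      ring
    have h3 := (Complex.ofRealCLM : ℝ →L[ℝ] ℂ).hasSum h2
    convert h3 using 1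
    · funext n
      simp
    · rw [hF_def]
      have het' : Real.exp t - 1 ≠ 0 := by linarith
      push_cast [Complex.ofReal_exp]
      norm_num
  have hGamma : Complex.Gamma s ≠ 0 := Complex.Gamma_ne_zero fun m ↦ by
    intro h
    rw [h] at hs0
    simp only [Complex.neg_re, Complex.natCast_re] at hs0
    have : (0:ℝ) ≤ (m:ℝ) := Nat.cast_nonneg m
    linarith
  have hp : ∀ n : ℕ+, (1 : ℂ) = 0 ∨ 0 < x + (n : ℕ) := fun n ↦ Or.inr (by positivity)
  have h_sum : Summable fun n : ℕ+ ↦ ‖(1 : ℂ)‖ / (x + (n : ℕ)) ^ s.re := by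
    have hbase : Summable fun n : ℕ ↦ 1 / (n : ℝ) ^ s.re :=
      Real.summable_one_div_nat_rpow.mpr hs
    have hsub : Summable fun n : ℕ+ ↦ 1 / ((n : ℕ) : ℝ) ^ s.re :=
      hbase.comp_injective PNat.coe_injective
    refine hsub.of_nonneg_of_le (fun n ↦ by positivity) fun n ↦ ?_
    simp only [norm_one]
    have hn1 : (1:ℝ) ≤ (n:ℕ) := by exact_mod_cast n.one_le
    gcongr
    linarith
  have key := hasSum_mellin hp hs0 hF h_sum
  have key' : HasSum (fun n : ℕ+ ↦ ((x : ℂ) + (n : ℕ)) ^ (-s))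
      ((Complex.Gamma s)⁻¹ * mellin F s) := by
    have := key.mul_left (Complex.Gamma s)⁻¹
    convert this using 2 with n
    · rfl
    have hxn : (0:ℝ) < x + (n : ℕ) := by positivity
    have hne : ((↑(x + (n:ℕ)) : ℂ)) ^ s ≠ 0 := by
      rw [Ne, Complex.cpow_eq_zero_iff, not_and_or]
      exact Or.inl (Complex.ofReal_ne_zero.mpr hxn.ne')
    rw [mul_one, Complex.cpow_neg]
    push_cast
    push_cast at hne
    field_simp
  rw [key'.tsum_eq, one_div, mellin]
  congr 1
  refine setIntegral_congr_fun measurableSet_Ioi fun t ht ↦ ?_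
  rw [smul_eq_mul, hF_def, mul_div_assoc]
end

section
/- Suppose that for every τ ∈ ℝ, Σ_{n=1}^∞ μ(n)/(n+x)^{3/2 + iτ} = O(1/x) as x → ∞. Then every nontrivial zero ρ of the Riemann zeta function satisfies Re(ρ) = 1/2 (the Riemann Hypothesis). -/
open ArithmeticFunction Filter Complex
open Set MeasureTheory
open scoped ArithmeticFunction.Moebius

lemma img_Ioo : (fun t : ℝ => t / (1 - t)) '' Ioo 0 1 = Ioi 0 := by
  ext y
  constructor
  · rintro ⟨t, ⟨ht0, ht1⟩, rfl⟩
    exact div_pos ht0 (by linarith)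
  · intro hy
    refine ⟨y / (1 + y), ⟨div_pos hy (by linarith [mem_Ioi.mp hy]), ?_⟩, ?_⟩
    · rw [div_lt_one (by linarith [mem_Ioi.mp hy])]; linarith [mem_Ioi.mp hy]
    · have h1 : (0:ℝ) < 1 + y := by linarith [mem_Ioi.mp hy]
      field_simp
      ring

lemma deriv_Ioo : ∀ t ∈ Ioo (0:ℝ) 1,
    HasDerivWithinAt (fun t : ℝ => t / (1 - t)) (((1 - t) ^ 2)⁻¹) (Ioo 0 1) t := by
  intro t ⟨ht0, ht1⟩
  have hne : (1 : ℝ) - t ≠ 0 := by linarith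
  have := (hasDerivAt_id t).div ((hasDerivAt_id t).const_sub 1) hne
  rw [show ((1 - t) ^ 2)⁻¹ = (1 * (1 - id t) - id t * -1) / (1 - id t) ^ 2 by
    simp only [id]; field_simp; ring]
  exact this.hasDerivWithinAt

lemma inj_Ioo : InjOn (fun t : ℝ => t / (1 - t)) (Ioo 0 1) := by
  intro a ⟨_, ha1⟩ b ⟨_, hb1⟩ hab
  have h1 : (1:ℝ) - a ≠ 0 := by linarith
  have h2 : (1:ℝ) - b ≠ 0 := by linarith
  field_simp at hab
  linarith

lemma betaIoi {u v : ℂ} (hu : 0 < u.re) (hv : 0 < v.re) :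
    ∫ x : ℝ in Ioi 0, (x:ℂ) ^ (u - 1) * (((1 + x : ℝ) : ℂ)) ^ (-(u + v))
      = Complex.Gamma u * Complex.Gamma v / Complex.Gamma (u + v) := by
  have key := integral_image_eq_integral_abs_deriv_smul measurableSet_Ioo deriv_Ioo inj_Ioo
    (fun x : ℝ => (x:ℂ) ^ (u - 1) * (((1 + x : ℝ) : ℂ)) ^ (-(u + v)))
  rw [img_Ioo] at key
  rw [key]
  have congr1 : ∫ t : ℝ in Ioo 0 1, |((1 - t) ^ 2)⁻¹| •
        ((((t / (1 - t) : ℝ) : ℂ)) ^ (u - 1) * (((1 + t / (1 - t) : ℝ) : ℂ)) ^ (-(u + v)))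
      = ∫ t : ℝ in Ioo 0 1, (t:ℂ) ^ (u - 1) * (1 - (t:ℂ)) ^ (v - 1) := by
    refine setIntegral_congr_fun measurableSet_Ioo (fun t ⟨ht0, ht1⟩ => ?_)
    have h1t : (0:ℝ) < 1 - t := by linarith
    have hBne : ((1 - t : ℝ) : ℂ) ≠ 0 := by
      exact_mod_cast Complex.ofReal_ne_zero.mpr h1t.ne'
    have harg : ((1 - t : ℝ) : ℂ).arg ≠ Real.pi := by
      rw [Complex.arg_ofReal_of_nonneg h1t.le]; exact Real.pi_ne_zero.symm
    have hx1 : (1 + t / (1 - t) : ℝ) = (1 - t)⁻¹ := by field_simp; ring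
    have hx2 : (t / (1 - t) : ℝ) = t * (1 - t)⁻¹ := by ring
    rw [hx1, hx2, Complex.ofReal_mul,
      mul_cpow_ofReal_nonneg ht0.le (inv_nonneg.mpr h1t.le), Complex.ofReal_inv,
      Complex.inv_cpow _ _ harg, Complex.inv_cpow _ _ harg, ← Complex.cpow_neg,
      ← Complex.cpow_neg, neg_neg]
    have hjac : |((1 - t) ^ 2)⁻¹| = ((1 - t) ^ 2)⁻¹ := abs_of_pos (by positivity)
    rw [hjac, Complex.real_smul, Complex.ofReal_inv, Complex.ofReal_pow]
    rw [show ((((1 - t:ℝ):ℂ)) ^ 2)⁻¹ = (((1 - t:ℝ):ℂ)) ^ (-2 : ℂ) by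
      rw [Complex.cpow_neg, Complex.cpow_ofNat]]
    calc ((1 - t:ℝ):ℂ) ^ (-2:ℂ) * ((t:ℂ) ^ (u-1) * ((1 - t:ℝ):ℂ) ^ (-(u-1)) * ((1 - t:ℝ):ℂ) ^ (u+v))
        = (t:ℂ) ^ (u-1) * (((1 - t:ℝ):ℂ) ^ (-2:ℂ) * ((1 - t:ℝ):ℂ) ^ (-(u-1)) * ((1 - t:ℝ):ℂ) ^ (u+v)) := by ring
      _ = (t:ℂ) ^ (u-1) * (1 - (t:ℂ)) ^ (v - 1) := by
          rw [← Complex.cpow_add _ _ hBne, ← Complex.cpow_add _ _ hBne]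
          push_cast
          congr 2
          ring
  rw [congr1]
  have hbeta : Complex.betaIntegral u v = ∫ t : ℝ in Ioo 0 1, (t:ℂ) ^ (u - 1) * (1 - (t:ℂ)) ^ (v - 1) := by
    rw [Complex.betaIntegral, intervalIntegral.integral_of_le zero_le_one,
      MeasureTheory.integral_Ioc_eq_integral_Ioo]
  rw [← hbeta, eq_div_iff (Complex.Gamma_ne_zero (fun m => ?_)), mul_comm,
    ← Complex.Gamma_mul_Gamma_eq_betaIntegral hu hv]
  intro hc
  have : (u + v).re = (-(m:ℂ)).re := by rw [hc]
  simp only [Complex.add_re, Complex.neg_re, Complex.natCast_re] at this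
  have : (0:ℝ) ≤ m := Nat.cast_nonneg m
  linarith [hu, hv]

lemma betaIoiScaled {w s : ℂ} (hw : 0 < w.re) (hws : w.re < s.re) {a : ℝ} (ha : 0 < a) :
    ∫ x : ℝ in Ioi 0, (x:ℂ) ^ (w - 1) * (((a + x : ℝ) : ℂ)) ^ (-s)
      = (a:ℂ) ^ (w - s) * (Complex.Gamma w * Complex.Gamma (s - w) / Complex.Gamma s) := by
  have hane : (a:ℂ) ≠ 0 := Complex.ofReal_ne_zero.mpr ha.ne'
  have base := betaIoi hw (by simp only [Complex.sub_re]; linarith : 0 < (s - w).re)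
  rw [add_sub_cancel] at base
  have key := MeasureTheory.integral_comp_mul_left_Ioi
    (fun x : ℝ => (x:ℂ) ^ (w - 1) * (((a + x : ℝ) : ℂ)) ^ (-s)) 0 ha
  rw [mul_zero] at key
  -- key : ∫ x in Ioi 0, g (a * x) = a⁻¹ • ∫ x in Ioi 0, g x
  have expand : ∀ x ∈ Ioi (0:ℝ),
      ((a * x : ℝ):ℂ) ^ (w - 1) * (((a + a * x : ℝ) : ℂ)) ^ (-s)
        = ((a:ℂ) ^ (w - 1) * (a:ℂ) ^ (-s)) * ((x:ℂ) ^ (w - 1) * (((1 + x : ℝ) : ℂ)) ^ (-s)) := by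
    intro x hx
    have hx0 : (0:ℝ) < x := hx
    have h1 : (a + a * x : ℝ) = a * (1 + x) := by ring
    rw [h1, Complex.ofReal_mul, Complex.ofReal_mul,
      mul_cpow_ofReal_nonneg ha.le hx0.le,
      mul_cpow_ofReal_nonneg ha.le (by linarith : (0:ℝ) ≤ 1 + x)]
    ring
  rw [MeasureTheory.setIntegral_congr_fun measurableSet_Ioi expand] at key
  rw [MeasureTheory.integral_const_mul, base] at key
  -- key : a^(w-1) * a^(-s) * beta = a⁻¹ • ∫ x in Ioi 0, x^(w-1) * (a+x)^(-s)
  have := congrArg (fun z => (a:ℝ) • z) key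
  simp only [smul_smul, mul_inv_cancel₀ ha.ne', one_smul] at this
  rw [← this, Complex.real_smul]
  have hpow : (a:ℂ) * ((a:ℂ) ^ (w-1) * (a:ℂ) ^ (-s)) = (a:ℂ) ^ (w - s) := by
    rw [← Complex.cpow_add _ _ hane]
    nth_rewrite 1 [← Complex.cpow_one (a:ℂ)]
    rw [← Complex.cpow_add _ _ hane]
    congr 1; ring
  rw [← mul_assoc, hpow]

lemma integrableBetaReal {u v : ℝ} (hu : 0 < u) (hv : u < v) :
    MeasureTheory.IntegrableOn (fun x : ℝ => x ^ (u - 1) * (1 + x) ^ (-v)) (Ioi 0) := by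
  rw [← img_Ioo, integrableOn_image_iff_integrableOn_abs_deriv_smul measurableSet_Ioo
    deriv_Ioo inj_Ioo]
  have hcong : ∀ t ∈ Ioo (0:ℝ) 1,
      |((1 - t) ^ 2)⁻¹| • ((t / (1 - t)) ^ (u - 1) * (1 + t / (1 - t)) ^ (-v))
        = t ^ (u - 1) * (1 - t) ^ (v - u - 1) := by
    intro t ⟨ht0, ht1⟩
    have h1t : (0:ℝ) < 1 - t := by linarith
    have hx1 : (1 + t / (1 - t) : ℝ) = (1 - t)⁻¹ := by field_simp; ring
    have hx2 : (t / (1 - t) : ℝ) = t * (1 - t)⁻¹ := by ring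
    rw [hx1, hx2, Real.mul_rpow ht0.le (inv_nonneg.mpr h1t.le),
      Real.inv_rpow h1t.le, Real.inv_rpow h1t.le, ← Real.rpow_neg h1t.le,
      ← Real.rpow_neg h1t.le, neg_neg, abs_of_pos (by positivity : (0:ℝ) < ((1-t)^2)⁻¹),
      smul_eq_mul, ← Real.rpow_natCast (1-t) 2, ← Real.rpow_neg h1t.le]
    rw [show ((1:ℝ)-t) ^ (-((2:ℕ):ℝ)) * (t ^ (u-1) * (1-t) ^ (-(u-1)) * (1-t) ^ v)
        = t ^ (u-1) * ((1-t) ^ (-((2:ℕ):ℝ)) * (1-t) ^ (-(u-1)) * (1-t) ^ v) by ring,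
      ← Real.rpow_add h1t, ← Real.rpow_add h1t,
      show -((2:ℕ):ℝ) + -(u-1) + v = v - u - 1 by push_cast; ring]
  rw [MeasureTheory.integrableOn_congr_fun hcong measurableSet_Ioo]
  have := Complex.betaIntegral_convergent (u := (u:ℂ)) (v := (v - u :ℂ))
    (by simpa using hu) (by simpa using sub_pos.mpr hv)
  have hnorm := this.norm
  rw [intervalIntegrable_iff_integrableOn_Ioo_of_le zero_le_one] at hnorm
  refine hnorm.congr_fun (fun t ⟨ht0, ht1⟩ => ?_) measurableSet_Ioo
  have h1t : (0:ℝ) < 1 - t := by linarith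
  beta_reduce
  rw [show (1 - (t:ℂ)) = ((1 - t : ℝ):ℂ) by push_cast; ring]
  rw [norm_mul,
    Complex.norm_cpow_eq_rpow_re_of_pos ht0, Complex.norm_cpow_eq_rpow_re_of_pos h1t]
  simp [Complex.sub_re]

open ArithmeticFunction in
noncomputable def fTerm (s : ℂ) (n : ℕ+) (x : ℝ) : ℂ :=
  (μ (n:ℕ) : ℂ) * ((((n:ℕ) : ℝ) + x : ℝ) : ℂ) ^ (-s)

noncomputable def fF (s : ℂ) (x : ℝ) : ℂ := ∑' n : ℕ+, fTerm s n x

lemma moebius_norm_le (n : ℕ) : ‖((ArithmeticFunction.moebius n : ℤ) : ℂ)‖ ≤ 1 := by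
  rw [Complex.norm_intCast]
  exact_mod_cast ArithmeticFunction.abs_moebius_le_one

lemma pnat_pos_real (n : ℕ+) : (0:ℝ) < ((n:ℕ):ℝ) := by exact_mod_cast n.pos

lemma fTerm_norm_le {s : ℂ} (hs : s.re = 3/2) (n : ℕ+) {x : ℝ} (hx : 0 ≤ x) :
    ‖fTerm s n x‖ ≤ ((n:ℕ):ℝ) ^ (-(3/2) : ℝ) := by
  have hn : (0:ℝ) < ((n:ℕ):ℝ) := pnat_pos_real n
  have hnx : (0:ℝ) < ((n:ℕ):ℝ) + x := by linarith
  rw [fTerm, norm_mul,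
    Complex.norm_cpow_eq_rpow_re_of_pos hnx, Complex.neg_re, hs]
  calc ‖((ArithmeticFunction.moebius (n:ℕ) : ℤ) : ℂ)‖ * (((n:ℕ):ℝ) + x) ^ (-(3/2):ℝ)
      ≤ 1 * (((n:ℕ):ℝ) + x) ^ (-(3/2):ℝ) := by
        apply mul_le_mul_of_nonneg_right (moebius_norm_le _) (Real.rpow_nonneg hnx.le _)
    _ = (((n:ℕ):ℝ) + x) ^ (-(3/2):ℝ) := one_mul _
    _ ≤ ((n:ℕ):ℝ) ^ (-(3/2):ℝ) :=
        Real.rpow_le_rpow_of_nonpos hn (by linarith) (by norm_num)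

lemma summable_pnat_rpow {r : ℝ} (hr : 1 < r) :
    Summable (fun n : ℕ+ => ((n:ℕ):ℝ) ^ (-r)) := by
  have h : Summable (fun n : ℕ => (n:ℝ) ^ (-r)) :=
    Real.summable_nat_rpow.mpr (by linarith)
  exact h.comp_injective PNat.coe_injective

lemma fTerm_summable_norm {s : ℂ} (hs : s.re = 3/2) {x : ℝ} (hx : 0 ≤ x) :
    Summable (fun n : ℕ+ => ‖fTerm s n x‖) :=
  Summable.of_nonneg_of_le (fun n => norm_nonneg _) (fun n => fTerm_norm_le hs n hx)
    (summable_pnat_rpow (by norm_num))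

lemma fF_norm_le {s : ℂ} (hs : s.re = 3/2) {x : ℝ} (hx : 0 ≤ x) :
    ‖fF s x‖ ≤ ∑' n : ℕ+, ((n:ℕ):ℝ) ^ (-(3/2) : ℝ) :=
  le_trans (norm_tsum_le_tsum_norm (fTerm_summable_norm hs hx))
    (Summable.tsum_le_tsum (fun n => fTerm_norm_le hs n hx) (fTerm_summable_norm hs hx)
      (summable_pnat_rpow (by norm_num)))

lemma fTerm_continuousOn (s : ℂ) (n : ℕ+) :
    ContinuousOn (fTerm s n) (Ioi 0) := by
  intro x hx
  have hnx : (0:ℝ) < ((n:ℕ):ℝ) + x := by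
    have := pnat_pos_real n; have : (0:ℝ) < x := hx; positivity
  have h1 : ContinuousAt (fun z : ℂ => z ^ (-s)) (((((n:ℕ):ℝ) + x : ℝ)) : ℂ) :=
    continuousAt_cpow_const (Or.inl (by simpa using hnx))
  have h2 : ContinuousAt (fun y : ℝ => (((((n:ℕ):ℝ) + y : ℝ)) : ℂ)) x := by fun_prop
  have h3 := ContinuousAt.comp (x := x) h1 h2
  have h4 : ContinuousAt (fun y : ℝ =>
      (ArithmeticFunction.moebius (n:ℕ) : ℂ) * ((((n:ℕ):ℝ) + y : ℝ) : ℂ) ^ (-s)) x := by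
    exact continuousAt_const.mul h3
  exact h4.continuousWithinAt

lemma fF_continuousOn {s : ℂ} (hs : s.re = 3/2) : ContinuousOn (fF s) (Ioi 0) := by
  apply continuousOn_tsum (fun n => fTerm_continuousOn s n) (summable_pnat_rpow
    (by norm_num : (1:ℝ) < 3/2))
  exact fun n x hx => fTerm_norm_le hs n (le_of_lt hx)

lemma cpow_continuousOn (w : ℂ) : ContinuousOn (fun x : ℝ => (x:ℂ) ^ (w - 1)) (Ioi 0) := by
  intro x hx
  have hx0 : (0:ℝ) < x := hx
  have h1 : ContinuousAt (fun z : ℂ => z ^ (w - 1)) (x : ℂ) :=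
    continuousAt_cpow_const (Or.inl (by simpa using hx0))
  have h2 : ContinuousAt (fun y : ℝ => (y : ℂ)) x := Complex.continuous_ofReal.continuousAt
  have h3 := ContinuousAt.comp (x := x) h1 h2
  exact h3.continuousWithinAt

lemma mellin_fF_eq {s : ℂ} (hs : s.re = 3/2) {w : ℂ} (hw0 : 0 < w.re) (hw1 : w.re < 1/2) :
    mellin (fF s) w = (Complex.Gamma w * Complex.Gamma (s - w) / Complex.Gamma s) *
      ∑' n : ℕ+, (ArithmeticFunction.moebius (n:ℕ) : ℂ) * (((n:ℕ):ℝ):ℂ) ^ (w - s) := by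
  have hws : w.re < s.re := by rw [hs]; linarith
  set u := w.re with hu
  set δ : ℝ := 1 + (1/2 - u)/2 with hδ
  set η : ℝ := 3/2 - δ with hη
  have hδ1 : 1 < δ := by rw [hδ]; linarith
  have hδ0 : 0 ≤ δ := by linarith
  have hη0 : 0 ≤ η := by rw [hη, hδ]; linarith
  have huη : u < η := by rw [hη, hδ]; linarith
  have hδη : δ + η = 3/2 := by rw [hη]; ring
  set G : ℝ → ℝ := fun x => x ^ (u - 1) * (1 + x) ^ (-η) with hG
  have hGint : MeasureTheory.IntegrableOn G (Ioi 0) := integrableBetaReal hw0 huη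
  set F : ℕ+ → ℝ → ℂ := fun n x => (x:ℂ) ^ (w - 1) * fTerm s n x with hF
  -- pointwise norm bound
  have hFle : ∀ n : ℕ+, ∀ x ∈ Ioi (0:ℝ), ‖F n x‖ ≤ ((n:ℕ):ℝ) ^ (-δ) * G x := by
    intro n x hx
    have hx0 : (0:ℝ) < x := hx
    have hn1 : (1:ℝ) ≤ ((n:ℕ):ℝ) := by exact_mod_cast n.one_le
    have hn0 : (0:ℝ) < ((n:ℕ):ℝ) := by linarith
    have hnx : (0:ℝ) < ((n:ℕ):ℝ) + x := by linarith
    have h1x : (0:ℝ) < 1 + x := by linarith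
    rw [hF, norm_mul]
    have e1 : ‖(x:ℂ) ^ (w - 1)‖ = x ^ (u - 1) := by
      rw [Complex.norm_cpow_eq_rpow_re_of_pos hx0, Complex.sub_re,
        Complex.one_re]
    have e2 : ‖fTerm s n x‖ ≤ (((n:ℕ):ℝ) + x) ^ (-(3/2):ℝ) := by
      rw [fTerm, norm_mul]
      have := moebius_norm_le (n:ℕ)
      have h2 : ‖(((((n:ℕ):ℝ) + x : ℝ)) : ℂ) ^ (-s)‖ = (((n:ℕ):ℝ) + x) ^ (-(3/2):ℝ) := by
        rw [Complex.norm_cpow_eq_rpow_re_of_pos hnx, Complex.neg_re, hs]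
      rw [h2]
      exact mul_le_of_le_one_left (Real.rpow_nonneg hnx.le _) (moebius_norm_le _)
    have e3 : (((n:ℕ):ℝ) + x) ^ (-(3/2):ℝ) ≤ ((n:ℕ):ℝ) ^ (-δ) * (1 + x) ^ (-η) := by
      have key : ((n:ℕ):ℝ) ^ δ * (1 + x) ^ η ≤ (((n:ℕ):ℝ) + x) ^ (3/2:ℝ) := by
        rw [← hδη, Real.rpow_add hnx]
        exact mul_le_mul (Real.rpow_le_rpow hn0.le (by linarith) hδ0)
          (Real.rpow_le_rpow h1x.le (by linarith) hη0) (Real.rpow_nonneg h1x.le _)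
          (Real.rpow_nonneg hnx.le _)
      have hpos : (0:ℝ) < ((n:ℕ):ℝ) ^ δ * (1 + x) ^ η := by positivity
      rw [Real.rpow_neg hnx.le, Real.rpow_neg hn0.le, Real.rpow_neg h1x.le, ← mul_inv]
      exact inv_anti₀ hpos key
    calc ‖(x:ℂ) ^ (w - 1)‖ * ‖fTerm s n x‖
        ≤ x ^ (u - 1) * ((((n:ℕ):ℝ) + x) ^ (-(3/2):ℝ)) := by
          rw [e1]; exact mul_le_mul_of_nonneg_left e2 (Real.rpow_nonneg hx0.le _)
      _ ≤ x ^ (u - 1) * (((n:ℕ):ℝ) ^ (-δ) * (1 + x) ^ (-η)) :=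
          mul_le_mul_of_nonneg_left e3 (Real.rpow_nonneg hx0.le _)
      _ = ((n:ℕ):ℝ) ^ (-δ) * G x := by rw [hG]; ring
  -- measurability
  have hFmeas : ∀ n : ℕ+, MeasureTheory.AEStronglyMeasurable (F n)
      (MeasureTheory.volume.restrict (Ioi 0)) := fun n =>
    ((cpow_continuousOn w).mul (fTerm_continuousOn s n)).aestronglyMeasurable measurableSet_Ioi
  -- lintegral bound
  have hlint : ∑' n : ℕ+, ∫⁻ x in Ioi 0, ‖F n x‖₊ ≠ ⊤ := by
    have per : ∀ n : ℕ+, ∫⁻ x in Ioi 0, ‖F n x‖₊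
        ≤ ENNReal.ofReal (((n:ℕ):ℝ) ^ (-δ)) * ENNReal.ofReal (∫ x in Ioi 0, G x) := by
      intro n
      have h1 : ∫⁻ x in Ioi 0, ‖F n x‖₊
          ≤ ∫⁻ x in Ioi 0, ENNReal.ofReal (((n:ℕ):ℝ) ^ (-δ) * G x) := by
        apply MeasureTheory.lintegral_mono_ae
        rw [MeasureTheory.ae_restrict_iff' measurableSet_Ioi]
        filter_upwards with x hx
        rw [← enorm_eq_nnnorm, ← ofReal_norm]
        exact ENNReal.ofReal_le_ofReal (hFle n x hx)
      have h2 : ∫⁻ x in Ioi 0, ENNReal.ofReal (((n:ℕ):ℝ) ^ (-δ) * G x)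
          = ENNReal.ofReal (∫ x in Ioi 0, ((n:ℕ):ℝ) ^ (-δ) * G x) := by
        rw [← MeasureTheory.ofReal_integral_eq_lintegral_ofReal (hGint.const_mul _)]
        · refine Filter.Eventually.mono (MeasureTheory.ae_restrict_mem measurableSet_Ioi) ?_
          intro x hx
          have hx0 : (0:ℝ) < x := hx
          have h1x : (0:ℝ) < 1 + x := by linarith
          simp only [Pi.zero_apply, hG]
          positivity
      calc ∫⁻ x in Ioi 0, ‖F n x‖₊
          ≤ ∫⁻ x in Ioi 0, ENNReal.ofReal (((n:ℕ):ℝ) ^ (-δ) * G x) := h1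
        _ = ENNReal.ofReal (∫ x in Ioi 0, ((n:ℕ):ℝ) ^ (-δ) * G x) := h2
        _ = ENNReal.ofReal (((n:ℕ):ℝ) ^ (-δ)) * ENNReal.ofReal (∫ x in Ioi 0, G x) := by
            rw [MeasureTheory.integral_const_mul, ENNReal.ofReal_mul
              (Real.rpow_nonneg (Nat.cast_nonneg _) _)]
    have hsum : Summable (fun n : ℕ+ => ((n:ℕ):ℝ) ^ (-δ)) := summable_pnat_rpow hδ1
    have : ∑' n : ℕ+, ENNReal.ofReal (((n:ℕ):ℝ) ^ (-δ)) * ENNReal.ofReal (∫ x in Ioi 0, G x)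
        ≠ ⊤ := by
      rw [ENNReal.tsum_mul_right, ← ENNReal.ofReal_tsum_of_nonneg
        (fun n => Real.rpow_nonneg (Nat.cast_nonneg _) _) hsum]
      exact ENNReal.mul_ne_top ENNReal.ofReal_ne_top ENNReal.ofReal_ne_top
    exact ne_top_of_le_ne_top this (ENNReal.tsum_le_tsum per)
  -- swap
  have hswap : (∫ x in Ioi 0, ∑' n : ℕ+, F n x) = ∑' n : ℕ+, ∫ x in Ioi 0, F n x :=
    MeasureTheory.integral_tsum hFmeas hlint
  have hmel : mellin (fF s) w = ∫ x in Ioi 0, ∑' n : ℕ+, F n x := by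
    rw [mellin]
    refine MeasureTheory.setIntegral_congr_fun measurableSet_Ioi (fun x hx => ?_)
    rw [smul_eq_mul, fF, hF]
    exact (tsum_mul_left).symm
  -- per-term value
  have hterm : ∀ n : ℕ+, (∫ x in Ioi 0, F n x)
      = ((ArithmeticFunction.moebius (n:ℕ) : ℤ):ℂ) * (((n:ℕ):ℝ):ℂ) ^ (w - s)
        * (Complex.Gamma w * Complex.Gamma (s - w) / Complex.Gamma s) := by
    intro n
    have hn0 : (0:ℝ) < ((n:ℕ):ℝ) := pnat_pos_real n
    have e : ∀ x ∈ Ioi (0:ℝ), F n x = ((ArithmeticFunction.moebius (n:ℕ) : ℤ):ℂ) *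
        ((x:ℂ) ^ (w - 1) * (((((n:ℕ):ℝ) + x : ℝ)) : ℂ) ^ (-s)) := by
      intro x hx
      rw [hF]
      unfold fTerm
      ring
    rw [MeasureTheory.setIntegral_congr_fun measurableSet_Ioi e,
      MeasureTheory.integral_const_mul, betaIoiScaled hw0 hws hn0]
    ring
  rw [hmel, hswap, tsum_congr hterm, tsum_mul_right]
  ring

open ArithmeticFunction in
lemma tsum_pnat_moebius (z : ℂ) :
    ∑' n : ℕ+, (ArithmeticFunction.moebius (n:ℕ) : ℂ) * (((n:ℕ):ℝ):ℂ) ^ (-z)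
      = LSeries (fun n : ℕ => (ArithmeticFunction.moebius n : ℂ)) z := by
  rw [LSeries]
  rw [← Function.Injective.tsum_eq (g := (fun n : ℕ+ => (n : ℕ)))
    PNat.coe_injective (f := LSeries.term (fun n : ℕ => (moebius n : ℂ)) z) ?_]
  · apply tsum_congr
    intro n
    rw [LSeries.term_of_ne_zero n.ne_zero, Complex.cpow_neg, div_eq_mul_inv,
      Complex.ofReal_natCast]
  · intro m hm
    rcases Nat.eq_zero_or_pos m with rfl | hpos
    · simp only [Function.mem_support, LSeries.term_zero, ne_eq, not_true_eq_false] at hm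
    · exact ⟨⟨m, hpos⟩, rfl⟩

lemma ne_neg_nat_of_re_pos {z : ℂ} (hz : 0 < z.re) : ∀ m : ℕ, z ≠ -m := by
  intro m hc
  have : z.re = (-(m:ℂ)).re := by rw [hc]
  simp only [Complex.neg_re, Complex.natCast_re] at this
  have : (0:ℝ) ≤ m := Nat.cast_nonneg m
  linarith

lemma strip_pre {p : ℂ} (hp : p.re = 1/2) :
    IsPreconnected ({w : ℂ | 0 < w.re ∧ w.re < 1} \ {p}) := by
  set A := {w : ℂ | (0 < w.re ∧ w.re < 1) ∧ w.im < p.im} with hA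
  set B := {w : ℂ | (0 < w.re ∧ w.re < 1) ∧ p.im < w.im} with hB
  set C1 := {w : ℂ | 0 < w.re ∧ w.re < 1/2} with hC1
  set C2 := {w : ℂ | 1/2 < w.re ∧ w.re < 1} with hC2
  have hAc : Convex ℝ A := (((convex_halfSpace_re_gt 0).inter (convex_halfSpace_re_lt 1)).inter
    (convex_halfSpace_im_lt p.im))
  have hBc : Convex ℝ B := (((convex_halfSpace_re_gt 0).inter (convex_halfSpace_re_lt 1)).inter
    (convex_halfSpace_im_gt p.im))
  have hC1c : Convex ℝ C1 := (convex_halfSpace_re_gt 0).inter (convex_halfSpace_re_lt (1/2))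
  have hC2c : Convex ℝ C2 := (convex_halfSpace_re_gt (1/2)).inter (convex_halfSpace_re_lt 1)
  have hseq : {w : ℂ | 0 < w.re ∧ w.re < 1} \ {p} = ((A ∪ C1) ∪ C2) ∪ B := by
    ext w
    simp only [Set.mem_diff, Set.mem_singleton_iff, Set.mem_union, hA, hB, hC1, hC2,
      Set.mem_setOf_eq]
    constructor
    · rintro ⟨⟨h0, h1⟩, hne⟩
      rcases lt_trichotomy w.im p.im with him | him | him
      · exact Or.inl (Or.inl (Or.inl ⟨⟨h0, h1⟩, him⟩))
      · rcases lt_trichotomy w.re (1/2) with hre | hre | hre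
        · exact Or.inl (Or.inl (Or.inr ⟨h0, hre⟩))
        · exact absurd (Complex.ext (by rw [hre, hp]) him) hne
        · exact Or.inl (Or.inr ⟨hre, h1⟩)
      · exact Or.inr ⟨⟨h0, h1⟩, him⟩
    · rintro (((⟨⟨h0, h1⟩, him⟩ | ⟨h0, h1⟩) | ⟨h0, h1⟩) | ⟨⟨h0, h1⟩, him⟩)
      · exact ⟨⟨h0, h1⟩, fun hc => by rw [hc] at him; exact lt_irrefl _ him⟩
      · refine ⟨⟨h0, by linarith⟩, fun hc => ?_⟩
        rw [hc, hp] at h1; linarith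
      · refine ⟨⟨by linarith, h1⟩, fun hc => ?_⟩
        rw [hc, hp] at h0; linarith
      · exact ⟨⟨h0, h1⟩, fun hc => by rw [hc] at him; exact lt_irrefl _ him⟩
  rw [hseq]
  have m1 : (⟨1/4, p.im - 1⟩ : ℂ) ∈ A := ⟨⟨by norm_num, by norm_num⟩, by
    show p.im - 1 < p.im; linarith⟩
  have m1' : (⟨1/4, p.im - 1⟩ : ℂ) ∈ C1 := ⟨by norm_num, by norm_num⟩
  have u1 : IsPreconnected (A ∪ C1) :=
    IsPreconnected.union _ m1 m1' hAc.isPreconnected hC1c.isPreconnected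
  have m2 : (⟨3/4, p.im - 1⟩ : ℂ) ∈ A ∪ C1 := Or.inl ⟨⟨by norm_num, by norm_num⟩, by
    show p.im - 1 < p.im; linarith⟩
  have m2' : (⟨3/4, p.im - 1⟩ : ℂ) ∈ C2 := ⟨by norm_num, by norm_num⟩
  have u2 : IsPreconnected ((A ∪ C1) ∪ C2) :=
    IsPreconnected.union _ m2 m2' u1 hC2c.isPreconnected
  have m3 : (⟨1/4, p.im + 1⟩ : ℂ) ∈ (A ∪ C1) ∪ C2 :=
    Or.inl (Or.inr ⟨by norm_num, by norm_num⟩)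
  have m3' : (⟨1/4, p.im + 1⟩ : ℂ) ∈ B := ⟨⟨by norm_num, by norm_num⟩, by
    show p.im < p.im + 1; linarith⟩
  exact IsPreconnected.union _ m3 m3' u2 hBc.isPreconnected

lemma zeta_zero_symm {ρ : ℂ} (hζ : riemannZeta ρ = 0) (h0 : 0 < ρ.re) (h1 : ρ.re < 1) :
    riemannZeta (1 - ρ) = 0 := by
  have hρ0 : ρ ≠ 0 := fun hc => by rw [hc] at h0; simp at h0
  have h1ρ0 : (1:ℂ) - ρ ≠ 0 := by
    intro hc
    have : ρ = 1 := by linear_combination -hc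
    rw [this] at h1; simp at h1
  have hΛ : completedRiemannZeta ρ = 0 := by
    have hd := riemannZeta_def_of_ne_zero hρ0
    rw [hζ, eq_comm, div_eq_zero_iff] at hd
    rcases hd with hd | hd
    · exact hd
    · exact absurd hd (Complex.Gammaℝ_ne_zero_of_re_pos h0)
  rw [riemannZeta_def_of_ne_zero h1ρ0, completedRiemannZeta_one_sub, hΛ, zero_div]

lemma fF_isBigO_atTop {s : ℂ} {C : ℝ} (hev : ∀ᶠ x : ℝ in Filter.atTop, ‖fF s x‖ ≤ C / x) :
    fF s =O[Filter.atTop] fun x : ℝ => x ^ (-1:ℝ) := by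
  rw [Asymptotics.isBigO_iff]
  refine ⟨C, ?_⟩
  filter_upwards [hev, Filter.eventually_gt_atTop (0:ℝ)] with x h1 h2
  rwa [Real.norm_eq_abs, Real.rpow_neg_one, abs_of_pos (inv_pos.mpr h2), ← div_eq_mul_inv]

lemma fF_isBigO_zero {s : ℂ} (hs : s.re = 3/2) :
    fF s =O[nhdsWithin 0 (Ioi 0)] fun x : ℝ => x ^ (-(0:ℝ)) := by
  rw [Asymptotics.isBigO_iff]
  refine ⟨∑' n : ℕ+, ((n:ℕ):ℝ) ^ (-(3/2):ℝ), ?_⟩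
  filter_upwards [self_mem_nhdsWithin] with x hx
  have hx0 : (0:ℝ) < x := hx
  rw [neg_zero, Real.rpow_zero, norm_one, mul_one]
  exact fF_norm_le hs hx0.le

lemma fF_mellin_diff {s : ℂ} (hs : s.re = 3/2) {C : ℝ}
    (hev : ∀ᶠ x : ℝ in Filter.atTop, ‖fF s x‖ ≤ C / x) {w : ℂ}
    (hw0 : 0 < w.re) (hw1 : w.re < 1) :
    DifferentiableAt ℂ (mellin (fF s)) w :=
  mellin_differentiableAt_of_isBigO_rpow
    ((fF_continuousOn hs).locallyIntegrableOn measurableSet_Ioi)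
    (fF_isBigO_atTop hev) hw1 (fF_isBigO_zero hs) hw0

open ArithmeticFunction in
lemma no_zero_right
    (h : ∀ τ : ℝ, ∃ C : ℝ, ∀ᶠ x : ℝ in Filter.atTop,
      ‖∑' n : ℕ+, (μ (n : ℕ) : ℂ) / ((n : ℕ) + (x : ℂ)) ^ ((3 / 2 : ℂ) + τ * Complex.I)‖
        ≤ C / x)
    {ρ : ℂ} (hζ : riemannZeta ρ = 0) (h1 : 1/2 < ρ.re) (h2 : ρ.re < 1) : False := by
  set τ : ℝ := ρ.im with hτ
  set s : ℂ := (3/2 : ℂ) + τ * Complex.I with hsdef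
  have hsre : s.re = 3/2 := by simp [hsdef]
  obtain ⟨C, hC⟩ := h τ
  have hCf : ∀ᶠ x : ℝ in Filter.atTop, ‖fF s x‖ ≤ C / x := by
    filter_upwards [hC] with x hx
    have he : fF s x = ∑' n : ℕ+, (μ (n : ℕ) : ℂ) / ((n : ℕ) + (x : ℂ)) ^ ((3/2 : ℂ) + τ * Complex.I) := by
      apply tsum_congr
      intro n
      unfold fTerm
      rw [← hsdef]
      have hb : ((n : ℕ) : ℂ) + (x : ℂ) = ((((n:ℕ):ℝ) + x : ℝ) : ℂ) := by push_cast; ring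
      rw [hb, Complex.cpow_neg, div_eq_mul_inv]
    rwa [he]
  set Bf : ℂ → ℂ := fun w => Complex.Gamma w * Complex.Gamma (s - w) / Complex.Gamma s
    with hBf
  set Hf : ℂ → ℂ := fun w => mellin (fF s) w * riemannZeta (s - w) - Bf w with hHf
  set p : ℂ := s - 1 with hpdef
  have hpre : p.re = 1/2 := by
    rw [hpdef, Complex.sub_re, hsre, Complex.one_re]; norm_num
  set U : Set ℂ := {w : ℂ | 0 < w.re ∧ w.re < 1} \ {p} with hU
  have hstrip_open : IsOpen {w : ℂ | 0 < w.re ∧ w.re < 1} := by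
    have : {w : ℂ | 0 < w.re ∧ w.re < 1} = Complex.re ⁻¹' (Ioo 0 1) := by
      ext w; simp [Set.mem_Ioo]
    rw [this]
    exact isOpen_Ioo.preimage Complex.continuous_re
  have hUopen : IsOpen U := hstrip_open.sdiff isClosed_singleton
  have hsG : Complex.Gamma s ≠ 0 := Complex.Gamma_ne_zero_of_re_pos (by rw [hsre]; norm_num)
  have hdiff : DifferentiableOn ℂ Hf U := by
    intro w hw
    obtain ⟨⟨hw0, hw1⟩, hwp⟩ := hw
    have hwp' : w ≠ p := fun hc => hwp (by rw [hc]; exact rfl)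
    have hmd : DifferentiableAt ℂ (mellin (fF s)) w := fF_mellin_diff hsre hCf hw0 hw1
    have hswne : s - w ≠ 1 := by
      intro hc
      apply hwp'
      rw [hpdef]
      linear_combination -hc
    have hzd : DifferentiableAt ℂ (fun w => riemannZeta (s - w)) w :=
      (differentiableAt_riemannZeta hswne).comp w ((differentiableAt_const s).sub differentiableAt_id)
    have hg1 : DifferentiableAt ℂ Complex.Gamma w :=
      Complex.differentiableAt_Gamma w (ne_neg_nat_of_re_pos hw0)
    have hg2 : DifferentiableAt ℂ (fun w => Complex.Gamma (s - w)) w := by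
      refine DifferentiableAt.comp w (Complex.differentiableAt_Gamma _ ?_)
        ((differentiableAt_const s).sub differentiableAt_id)
      apply ne_neg_nat_of_re_pos
      rw [Complex.sub_re, hsre]; linarith
    exact (((hmd.mul hzd).sub (((hg1.mul hg2)).div_const _))).differentiableWithinAt
  have hvanish : ∀ w : ℂ, 0 < w.re → w.re < 1/2 → Hf w = 0 := by
    intro w hw0 hw1
    have hzre : 1 < (s - w).re := by rw [Complex.sub_re, hsre]; linarith
    have hmel := mellin_fF_eq hsre hw0 hw1
    have hsub : w - s = -(s - w) := by ring
    rw [hsub, tsum_pnat_moebius (s - w)] at hmel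
    have hmul : riemannZeta (s - w) * LSeries (fun n : ℕ => (moebius n : ℂ)) (s - w) = 1 := by
      have := LSeries_zeta_mul_Lseries_moebius hzre
      rwa [LSeries_zeta_eq_riemannZeta hzre] at this
    rw [hHf]
    simp only
    rw [hmel]
    calc Bf w * LSeries (fun n : ℕ => (moebius n : ℂ)) (s - w) * riemannZeta (s - w) - Bf w
        = Bf w * (riemannZeta (s - w) * LSeries (fun n : ℕ => (moebius n : ℂ)) (s - w)) - Bf w := by
          ring
      _ = 0 := by rw [hmul, mul_one, sub_self]
  -- identity theorem
  have hVopen : IsOpen {w : ℂ | 0 < w.re ∧ w.re < 1/2} := by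
    have : {w : ℂ | 0 < w.re ∧ w.re < 1/2} = Complex.re ⁻¹' (Ioo 0 (1/2)) := by
      ext w; simp [Set.mem_Ioo]
    rw [this]
    exact isOpen_Ioo.preimage Complex.continuous_re
  have hz₀U : ((1/4 : ℂ)) ∈ U := by
    constructor
    · constructor <;> norm_num
    · intro hc
      have : ((1/4:ℂ)).re = p.re := by rw [Set.mem_singleton_iff.mp hc]
      rw [hpre] at this
      norm_num at this
  have hev : Hf =ᶠ[nhds (1/4 : ℂ)] 0 := by
    have hmem : {w : ℂ | 0 < w.re ∧ w.re < 1/2} ∈ nhds (1/4 : ℂ) :=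
      hVopen.mem_nhds (by constructor <;> norm_num)
    filter_upwards [hmem] with w hw
    exact hvanish w hw.1 hw.2
  have heq := AnalyticOnNhd.eqOn_of_preconnected_of_eventuallyEq
    (hdiff.analyticOnNhd hUopen)
    ((differentiableOn_const (0:ℂ)).analyticOnNhd hUopen)
    (strip_pre hpre) hz₀U hev
  have hw₀U : (s - ρ) ∈ U := by
    constructor
    · constructor
      · rw [Complex.sub_re, hsre]; linarith
      · rw [Complex.sub_re, hsre]; linarith
    · intro hc
      have : s - ρ = p := Set.mem_singleton_iff.mp hc
      rw [hpdef] at this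
      have hρ1 : ρ = 1 := by linear_combination -this
      rw [hρ1] at h2
      simp at h2
  have hfinal := heq hw₀U
  have hssρ : s - (s - ρ) = ρ := by ring
  rw [hHf] at hfinal
  simp only [Pi.zero_apply] at hfinal
  rw [hssρ, hζ, mul_zero, zero_sub, neg_eq_zero, hBf] at hfinal
  simp only at hfinal
  rw [div_eq_zero_iff] at hfinal
  rcases hfinal with hfinal | hfinal
  · rcases mul_eq_zero.mp hfinal with hg | hg
    · exact Complex.Gamma_ne_zero_of_re_pos (by rw [Complex.sub_re, hsre]; linarith) hg
    · rw [hssρ] at hg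
      exact Complex.Gamma_ne_zero_of_re_pos (by linarith) hg
  · exact hsG hfinal

theorem stmt_14
    (h : ∀ τ : ℝ, ∃ C : ℝ, ∀ᶠ x : ℝ in atTop,
      ‖∑' n : ℕ+, (μ (n : ℕ) : ℂ) / ((n : ℕ) + (x : ℂ)) ^ ((3 / 2 : ℂ) + τ * I)‖
        ≤ C / x) :
    ∀ ρ : ℂ, riemannZeta ρ = 0 → 0 < ρ.re → ρ.re < 1 → ρ.re = 1 / 2 := by
  intro ρ hζ h0 h1
  by_contra hne
  rcases lt_or_gt_of_ne hne with hlt | hgt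
  · have hζ' : riemannZeta (1 - ρ) = 0 := zeta_zero_symm hζ h0 h1
    refine no_zero_right h hζ' ?_ ?_
    · rw [Complex.sub_re, Complex.one_re]; linarith
    · rw [Complex.sub_re, Complex.one_re]; linarith
  · exact no_zero_right h hζ hgt h1
end
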